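/- Let N ≥ 2 and p ≥ 1 satisfy log(Np)/p < 1/√(2π), and let t̄ be the unique real number with Φ(t̄) = (1/N)^{1/p}. Then t̄ > 0 and t̄ ≥ √(2·log(p/(√(2π)·log N))) − 2. -/

import Mathlib

open MeasureTheory ProbabilityTheory

/-- The standard normal cumulative distribution function `Φ`. -/
noncomputable def stdNormalCDF (t : ℝ) : ℝ :=
  ((ProbabilityTheory.gaussianReal 0 1) (Set.Iic t)).toReal

lemma gpdf_eq (x : ℝ) :
    gaussianPDFReal 0 1 x = (Real.sqrt (2 * Real.pi))⁻¹ * Real.exp (-x ^ 2 / 2) := by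
  simp [gaussianPDFReal]

lemma stdNormalCDF_eq (t : ℝ) :
    stdNormalCDF t = ∫ x in Set.Iic t, gaussianPDFReal 0 1 x := by
  rw [stdNormalCDF, gaussianReal_apply_eq_integral 0 one_ne_zero, ENNReal.toReal_ofReal]
  exact setIntegral_nonneg measurableSet_Iic (fun x _ => gaussianPDFReal_nonneg 0 1 x)

lemma stdNormalCDF_mono : Monotone stdNormalCDF := by
  intro x y hxy
  rw [stdNormalCDF_eq, stdNormalCDF_eq]
  exact setIntegral_mono_set ((integrable_gaussianPDFReal 0 1).integrableOn)
    (Filter.Eventually.of_forall fun z => gaussianPDFReal_nonneg 0 1 z)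
    (HasSubset.Subset.eventuallyLE (Set.Iic_subset_Iic.2 hxy))

lemma stdNormalCDF_zero : stdNormalCDF 0 = 1 / 2 := by
  have hint := integrable_gaussianPDFReal 0 1
  have h1 : (∫ x in Set.Iic (0:ℝ), gaussianPDFReal 0 1 x)
      + ∫ x in Set.Ioi (0:ℝ), gaussianPDFReal 0 1 x = 1 := by
    rw [intervalIntegral.integral_Iic_add_Ioi hint.integrableOn hint.integrableOn]
    exact integral_gaussianPDFReal_eq_one 0 one_ne_zero
  have heven : ∀ x : ℝ, gaussianPDFReal 0 1 (-x) = gaussianPDFReal 0 1 x := fun x => by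
    simp [gaussianPDFReal, neg_sq]
  have h2 : (∫ x in Set.Iic (0:ℝ), gaussianPDFReal 0 1 x)
      = ∫ x in Set.Ioi (0:ℝ), gaussianPDFReal 0 1 x := by
    calc (∫ x in Set.Iic (0:ℝ), gaussianPDFReal 0 1 x)
        = ∫ x in Set.Iic (0:ℝ), gaussianPDFReal 0 1 (-x) := by simp_rw [heven]
      _ = ∫ x in Set.Ioi (-(0:ℝ)), gaussianPDFReal 0 1 x := integral_comp_neg_Iic _ _
      _ = ∫ x in Set.Ioi (0:ℝ), gaussianPDFReal 0 1 x := by rw [neg_zero]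
  rw [stdNormalCDF_eq]; linarith

lemma cdf_add_tail (t : ℝ) :
    stdNormalCDF t + ∫ x in Set.Ioi t, gaussianPDFReal 0 1 x = 1 := by
  have hint := integrable_gaussianPDFReal 0 1
  rw [stdNormalCDF_eq, intervalIntegral.integral_Iic_add_Ioi hint.integrableOn hint.integrableOn]
  exact integral_gaussianPDFReal_eq_one 0 one_ne_zero

lemma tail_lb {s : ℝ} (hs : 2 ≤ s) :
    2 * ((Real.sqrt (2 * Real.pi))⁻¹ * Real.exp (-s ^ 2 / 2))
      ≤ ∫ x in Set.Ioi (s - 2), gaussianPDFReal 0 1 x := by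
  have hint := (integrable_gaussianPDFReal 0 1).integrableOn (s := Set.Ioi (s - 2))
  have step1 : (∫ x in Set.Ioc (s - 2) s, gaussianPDFReal 0 1 x)
      ≤ ∫ x in Set.Ioi (s - 2), gaussianPDFReal 0 1 x :=
    setIntegral_mono_set hint (Filter.Eventually.of_forall fun z => gaussianPDFReal_nonneg 0 1 z)
      (HasSubset.Subset.eventuallyLE Set.Ioc_subset_Ioi_self)
  have step2 : (∫ _x in Set.Ioc (s - 2) s, (Real.sqrt (2 * Real.pi))⁻¹ * Real.exp (-s ^ 2 / 2))
      ≤ ∫ x in Set.Ioc (s - 2) s, gaussianPDFReal 0 1 x := by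
    refine setIntegral_mono_on (integrableOn_const measure_Ioc_lt_top.ne)
      (hint.mono_set Set.Ioc_subset_Ioi_self) measurableSet_Ioc ?_
    intro x hx
    rw [gpdf_eq]
    have hx0 : 0 ≤ x := le_trans (by linarith) hx.1.le
    have hx2 : x ^ 2 ≤ s ^ 2 := by nlinarith [hx.2]
    gcongr

  have step3 : (∫ _x in Set.Ioc (s - 2) s, (Real.sqrt (2 * Real.pi))⁻¹ * Real.exp (-s ^ 2 / 2))
      = 2 * ((Real.sqrt (2 * Real.pi))⁻¹ * Real.exp (-s ^ 2 / 2)) := by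
    rw [setIntegral_const, measureReal_def, Real.volume_Ioc, ENNReal.toReal_ofReal (by linarith)]
    simp [smul_eq_mul]
  linarith

/-- If `Φ(t̄) = (1/N)^{1/p}` and `log(Np)/p < 1/√(2π)` with `N ≥ 2`, then `t̄ > 0` and
`t̄ ≥ √(2 log(p/(√(2π) log N))) - 2`. -/
theorem quantile_lower_bound (N p : ℕ) (hN : 2 ≤ N) (hp : 1 ≤ p)
    (h : Real.log ((N : ℝ) * p) / p < 1 / Real.sqrt (2 * Real.pi))
    (tbar : ℝ)
    (htbar : stdNormalCDF tbar = (1 / (N : ℝ)) ^ ((1 : ℝ) / p)) :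
    0 < tbar ∧
      Real.sqrt (2 * Real.log ((p : ℝ) / (Real.sqrt (2 * Real.pi) * Real.log N))) - 2 ≤ tbar := by
  have hπ : 0 < Real.sqrt (2 * Real.pi) := Real.sqrt_pos.2 (by positivity)
  have hN1 : (1 : ℝ) < N := by
    have : (2 : ℝ) ≤ N := by exact_mod_cast hN
    linarith
  have hp0 : (0 : ℝ) < p := by exact_mod_cast hp
  have hp1 : (1 : ℝ) ≤ p := by exact_mod_cast hp
  have hlogN : 0 < Real.log N := Real.log_pos hN1
  set a := Real.log N / p with ha_def
  have ha0 : 0 < a := div_pos hlogN hp0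
  have ha_lt : a < 1 / Real.sqrt (2 * Real.pi) := by
    refine lt_of_le_of_lt ?_ h
    have hle : Real.log N ≤ Real.log ((N : ℝ) * p) := by
      apply Real.log_le_log (by positivity)
      nlinarith
    exact (div_le_div_iff_of_pos_right hp0).2 hle
  -- Φ(t̄) = exp(-a)
  have hΦ : stdNormalCDF tbar = Real.exp (-a) := by
    rw [htbar, Real.rpow_def_of_pos (by positivity), one_div (N : ℝ), Real.log_inv]
    congr 1
    rw [ha_def]; ring
  -- √(2π) > 2.5 and 1/√(2π) < log 2
  have h2π : (6.25 : ℝ) < 2 * Real.pi := by nlinarith [Real.pi_gt_d6]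
  have hsqrt25 : (2.5 : ℝ) < Real.sqrt (2 * Real.pi) := by
    have : Real.sqrt (6.25) < Real.sqrt (2 * Real.pi) := Real.sqrt_lt_sqrt (by norm_num) h2π
    rwa [show (6.25 : ℝ) = 2.5 ^ 2 by norm_num, Real.sqrt_sq (by norm_num)] at this
  have hinvlt : 1 / Real.sqrt (2 * Real.pi) < Real.log 2 := by
    have hlog2 : (0.6931471803 : ℝ) < Real.log 2 := Real.log_two_gt_d9
    have : 1 / Real.sqrt (2 * Real.pi) < 1 / 2.5 :=
      one_div_lt_one_div_of_lt (by norm_num) hsqrt25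
    linarith
  -- t̄ > 0
  have htpos : 0 < tbar := by
    by_contra hcon
    push_neg at hcon
    have hmon := stdNormalCDF_mono hcon
    rw [stdNormalCDF_zero, hΦ] at hmon
    have h1 : Real.exp (-Real.log 2) < Real.exp (-a) :=
      Real.exp_lt_exp.2 (neg_lt_neg (ha_lt.trans hinvlt))
    rw [Real.exp_neg, Real.exp_log two_pos] at h1
    norm_num at h1
    linarith
  refine ⟨htpos, ?_⟩
  set L := Real.log ((p : ℝ) / (Real.sqrt (2 * Real.pi) * Real.log N)) with hL_def
  have hx0 : 0 < (p : ℝ) / (Real.sqrt (2 * Real.pi) * Real.log N) := by positivity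
  have hexpL : Real.exp (-L) = Real.sqrt (2 * Real.pi) * a := by
    rw [Real.exp_neg, hL_def, Real.exp_log hx0, ha_def]
    field_simp
  have hLpos : 0 < L := by
    have h1 : Real.exp (-L) < 1 := by
      rw [hexpL]
      have : Real.sqrt (2 * Real.pi) * a < Real.sqrt (2 * Real.pi) * (1 / Real.sqrt (2 * Real.pi)) :=
        (mul_lt_mul_iff_right₀ hπ).2 ha_lt
      rwa [mul_one_div, div_self hπ.ne'] at this
    have := Real.exp_lt_one_iff.1 h1
    linarith
  set s := Real.sqrt (2 * L) with hs_def
  have hsq : s ^ 2 = 2 * L := Real.sq_sqrt (by positivity)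
  rcases le_or_gt s 2 with hs2 | hs2
  · linarith
  · -- show Φ(s-2) < Φ(t̄), hence s-2 < t̄
    have htail := tail_lb hs2.le
    have hφs : (Real.sqrt (2 * Real.pi))⁻¹ * Real.exp (-s ^ 2 / 2) = a := by
      rw [hsq, show -(2 * L) / 2 = -L by ring, hexpL]
      field_simp
    have hsum := cdf_add_tail (s - 2)
    have hub : stdNormalCDF (s - 2) ≤ 1 - 2 * a := by
      rw [hφs] at htail; linarith
    have hexp : 1 - a ≤ Real.exp (-a) := by linarith [Real.add_one_le_exp (-a)]
    have key : stdNormalCDF (s - 2) < stdNormalCDF tbar := by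
      rw [hΦ]; linarith
    have := stdNormalCDF_mono.reflect_lt key
    linarith
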